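/- Let K be a nonempty compact metric space and let Λ : C(K,ℝ) → C(K,ℝ) be a map such that: (i) U ≤ V implies ΛU ≤ ΛV; (ii) Λ(U + a) = ΛU + a for every U ∈ C(K,ℝ) and every constant a ∈ ℝ; (iii) there is L ≥ 0 such that for every n ≥ 1 the function Λⁿ0 is L-Lipschitz. Then there exists exactly one λ ∈ ℝ such that for every x ∈ K the quantity liminf_{n→∞} ( (Λⁿ0)(x) + n·λ ) is a finite real number; moreover, for this λ, the function Û(x) := liminf_{n→∞} ( (Λⁿ0)(x) + n·λ ) is L-Lipschitz on K. -/

import Mathlib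

open Filter Topology

/-- for a monotone operator on `C(K,ℝ)` commuting with addition of
constants and with uniformly Lipschitz iterates of `0`, there is a unique `λ` making
`liminf_n ((Λⁿ0)(x) + nλ)` finite, and the resulting function is `L`-Lipschitz. -/
theorem stmt11 (K : Type*) [MetricSpace K] [CompactSpace K] [Nonempty K]
    (Λ : C(K, ℝ) → C(K, ℝ))
    (hmono : ∀ U V : C(K, ℝ), U ≤ V → Λ U ≤ Λ V)
    (hconst : ∀ (U : C(K, ℝ)) (a : ℝ), Λ (U + ContinuousMap.const K a) =
      Λ U + ContinuousMap.const K a)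
    (L : ℝ) (hL : 0 ≤ L)
    (hlip : ∀ n : ℕ, 1 ≤ n → ∀ x y : K,
      |(Λ^[n] 0) x - (Λ^[n] 0) y| ≤ L * dist x y) :
    ∃ lam : ℝ,
      (∀ x : K, liminf (fun n : ℕ =>
          (((Λ^[n] 0) x + n * lam : ℝ) : EReal)) atTop ≠ ⊥ ∧
        liminf (fun n : ℕ => (((Λ^[n] 0) x + n * lam : ℝ) : EReal)) atTop ≠ ⊤) ∧
      (∀ lam' : ℝ,
        (∀ x : K, liminf (fun n : ℕ =>
            (((Λ^[n] 0) x + n * lam' : ℝ) : EReal)) atTop ≠ ⊥ ∧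
          liminf (fun n : ℕ => (((Λ^[n] 0) x + n * lam' : ℝ) : EReal)) atTop ≠ ⊤) →
        lam' = lam) ∧
      ∀ x y : K,
        |(liminf (fun n : ℕ => (((Λ^[n] 0) x + n * lam : ℝ) : EReal)) atTop).toReal -
          (liminf (fun n : ℕ => (((Λ^[n] 0) y + n * lam : ℝ) : EReal)) atTop).toReal| ≤
          L * dist x y := by
  obtain ⟨x₀⟩ := (inferInstance : Nonempty K)
  set D := Metric.diam (Set.univ : Set K) with hD
  have hDnn : 0 ≤ D := Metric.diam_nonneg
  have hdistD : ∀ x y : K, dist x y ≤ D := fun x y =>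
    Metric.dist_le_diam_of_mem isCompact_univ.isBounded (Set.mem_univ x) (Set.mem_univ y)
  set C := L * D with hCdef
  have hC : 0 ≤ C := mul_nonneg hL hDnn
  -- pointwise Lipschitz bound, valid for all n
  have hub : ∀ (n : ℕ) (x y : K), (Λ^[n] 0) x ≤ (Λ^[n] 0) y + L * dist x y := by
    intro n x y
    rcases Nat.eq_zero_or_pos n with h0 | h1
    · subst h0
      simp only [Function.iterate_zero, id_eq, ContinuousMap.zero_apply]
      have : 0 ≤ L * dist x y := mul_nonneg hL dist_nonneg
      linarith
    · have h := (abs_le.1 (hlip n h1 x y)).2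
      linarith
  have hubC : ∀ (n : ℕ) (x y : K), (Λ^[n] 0) x ≤ (Λ^[n] 0) y + C := by
    intro n x y
    have h1 := hub n x y
    have h2 : L * dist x y ≤ C := by
      rw [hCdef]
      exact mul_le_mul_of_nonneg_left (hdistD x y) hL
    linarith
  -- iterates commute with adding constants
  have htrans : ∀ (n : ℕ) (U : C(K, ℝ)) (c : ℝ),
      Λ^[n] (U + ContinuousMap.const K c) = Λ^[n] U + ContinuousMap.const K c := by
    intro n
    induction n with
    | zero => intro U c; simp
    | succ n ih =>
      intro U c
      rw [Function.iterate_succ_apply, Function.iterate_succ_apply, hconst, ih]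
  -- iterates are monotone
  have hmono' : ∀ (n : ℕ) (U V : C(K, ℝ)), U ≤ V → Λ^[n] U ≤ Λ^[n] V := by
    intro n
    induction n with
    | zero => intro U V h; simpa using h
    | succ n ih =>
      intro U V h
      rw [Function.iterate_succ_apply, Function.iterate_succ_apply]
      exact ih _ _ (hmono _ _ h)
  set a : ℕ → ℝ := fun n => (Λ^[n] 0) x₀ with ha
  have ha0 : a 0 = 0 := by simp [ha]
  -- approximate subadditivity / superadditivity
  have key : ∀ n m : ℕ, a (n + m) ≤ a n + a m + C ∧ a n + a m - C ≤ a (n + m) := by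
    intro n m
    have e : Λ^[n + m] (0 : C(K, ℝ)) = Λ^[n] (Λ^[m] 0) := Function.iterate_add_apply Λ n m 0
    constructor
    · have h1 : (Λ^[m] 0 : C(K, ℝ)) ≤ 0 + ContinuousMap.const K (a m + C) := by
        rw [ContinuousMap.le_def]
        intro x
        simpa using hubC m x x₀
      have h2 := hmono' n _ _ h1
      rw [htrans n 0 _] at h2
      have h3 := ContinuousMap.le_def.1 h2 x₀
      simp only [ContinuousMap.add_apply, ContinuousMap.const_apply] at h3
      rw [← e] at h3
      simp only [ha]
      linarith
    · have h1 : (0 : C(K, ℝ)) + ContinuousMap.const K (a m - C) ≤ Λ^[m] 0 := by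
        rw [ContinuousMap.le_def]
        intro x
        have := hubC m x₀ x
        simpa [ha] using by linarith [hubC m x₀ x]
      have h2 := hmono' n _ _ h1
      rw [htrans n 0 _] at h2
      have h3 := ContinuousMap.le_def.1 h2 x₀
      simp only [ContinuousMap.add_apply, ContinuousMap.const_apply] at h3
      rw [← e] at h3
      simp only [ha]
      linarith
  set b : ℕ → ℝ := fun n => a n + C with hbdef
  set c : ℕ → ℝ := fun n => -a n + C with hcdef
  have hb : Subadditive b := by
    intro m n
    have := (key m n).1
    simp only [hbdef]
    linarith
  have hc : Subadditive c := by
    intro m n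
    have := (key m n).2
    simp only [hcdef]
    linarith
  have hbc : ∀ n, b n + c n = 2 * C := by intro n; simp [hbdef, hcdef]; ring
  have hc0 : c 0 = C := by simp [hcdef, ha0]
  have hb0 : b 0 = C := by simp [hbdef, ha0]
  have hclin : ∀ k : ℕ, c k ≤ k * c 1 + C := by
    intro k
    have := hc.apply_mul_add_le k 1 0
    simpa [hc0] using this
  have hblin : ∀ k : ℕ, b k ≤ k * b 1 + C := by
    intro k
    have := hb.apply_mul_add_le k 1 0
    simpa [hb0] using this
  have hbddb : BddBelow (Set.range fun n : ℕ => b n / n) := by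
    refine ⟨min 0 (-(c 1)), ?_⟩
    rintro x ⟨k, rfl⟩
    rcases Nat.eq_zero_or_pos k with h0 | h1
    · subst h0; simp
    · have hk : (0 : ℝ) < k := by exact_mod_cast h1
      have h2 := hclin k
      have h3 := hbc k
      have h4 : -(c 1) ≤ b k / k := by
        rw [le_div_iff₀ hk]
        nlinarith
      exact le_trans (min_le_right _ _) h4
  have hbddc : BddBelow (Set.range fun n : ℕ => c n / n) := by
    refine ⟨min 0 (-(b 1)), ?_⟩
    rintro x ⟨k, rfl⟩
    rcases Nat.eq_zero_or_pos k with h0 | h1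
    · subst h0; simp
    · have hk : (0 : ℝ) < k := by exact_mod_cast h1
      have h2 := hblin k
      have h3 := hbc k
      have h4 : -(b 1) ≤ c k / k := by
        rw [le_div_iff₀ hk]
        nlinarith
      exact le_trans (min_le_right _ _) h4
  have hblim := hb.tendsto_lim hbddb
  have hclim := hc.tendsto_lim hbddc
  have hcl : hc.lim = -hb.lim := by
    have hsum : Tendsto (fun n : ℕ => b n / n + c n / n) atTop (𝓝 (hb.lim + hc.lim)) :=
      hblim.add hclim
    have hsum' : Tendsto (fun n : ℕ => b n / n + c n / n) atTop (𝓝 0) := by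
      have heq : (fun n : ℕ => b n / n + c n / n) = fun n : ℕ => 2 * C / n := by
        funext n
        rw [← add_div, hbc]
      rw [heq]
      exact tendsto_const_div_atTop_nhds_zero_nat (2 * C)
    have := tendsto_nhds_unique hsum hsum'
    linarith
  set lam : ℝ := -hb.lim with hlam
  -- the central bound
  have hbound : ∀ n : ℕ, |a n + n * lam| ≤ C := by
    intro n
    rcases Nat.eq_zero_or_pos n with h0 | h1
    · subst h0
      simpa [ha0] using hC
    · have hn : (0 : ℝ) < n := by exact_mod_cast h1
      have hn' : n ≠ 0 := by omega
      have h2 : hb.lim ≤ b n / n := hb.lim_le_div hbddb hn'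
      have h3 : hc.lim ≤ c n / n := hc.lim_le_div hbddc hn'
      rw [le_div_iff₀ hn] at h2 h3
      rw [hcl] at h3
      rw [abs_le]
      constructor
      · simp only [hbdef] at h2
        have : hb.lim = -lam := by rw [hlam]; ring
        nlinarith
      · simp only [hcdef] at h3
        nlinarith
  -- global bound for all points
  have hg : ∀ (n : ℕ) (x : K), |(Λ^[n] 0) x + n * lam| ≤ 2 * C := by
    intro n x
    have h1 := hubC n x x₀
    have h2 := hubC n x₀ x
    have h3 := abs_le.1 (hbound n)
    have ha' : a n = (Λ^[n] 0) x₀ := rfl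
    rw [abs_le]
    constructor <;> [linarith [h3.1]; linarith [h3.2]]
  have hbdd1 : ∀ x : K, IsBoundedUnder (· ≤ ·) atTop (fun n : ℕ => (Λ^[n] 0) x + n * lam) :=
    fun x => isBoundedUnder_of ⟨2 * C, fun n : ℕ => (abs_le.1 (hg n x)).2⟩
  have hbdd2 : ∀ x : K, IsBoundedUnder (· ≥ ·) atTop (fun n : ℕ => (Λ^[n] 0) x + n * lam) :=
    fun x => isBoundedUnder_of ⟨-(2 * C), fun n : ℕ => (abs_le.1 (hg n x)).1⟩
  -- the EReal liminf is the coercion of the real liminf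
  have hcoe : ∀ x : K, liminf (fun n : ℕ => (((Λ^[n] 0) x + n * lam : ℝ) : EReal)) atTop
      = ((liminf (fun n : ℕ => (Λ^[n] 0) x + n * lam) atTop : ℝ) : EReal) := by
    intro x
    exact (Monotone.map_liminf_of_continuousAt (f := fun r : ℝ => (r : EReal))
      EReal.coe_strictMono.monotone (fun n : ℕ => (Λ^[n] 0) x + n * lam)
      (continuous_coe_real_ereal.continuousAt)
      ((hbdd1 x).isCoboundedUnder_ge) (hbdd2 x)).symm
  refine ⟨lam, ?_, ?_, ?_⟩
  · intro x
    rw [hcoe x]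
    exact ⟨EReal.coe_ne_bot _, EReal.coe_ne_top _⟩
  · -- uniqueness
    intro lam' h'
    by_contra hne
    rcases lt_or_gt_of_ne hne with hlt | hgt
    · -- lam' < lam : liminf is ⊥
      apply (h' x₀).1
      rw [EReal.eq_bot_iff_forall_lt]
      intro y
      have hdelta : 0 < lam - lam' := by linarith
      have hle : liminf (fun n : ℕ => (((Λ^[n] 0) x₀ + n * lam' : ℝ) : EReal)) atTop
          ≤ ((y - 1 : ℝ) : EReal) := by
        have hev : ∀ᶠ n : ℕ in atTop,
            (((Λ^[n] 0) x₀ + n * lam' : ℝ) : EReal) ≤ ((y - 1 : ℝ) : EReal) := by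
          obtain ⟨N, hN⟩ := exists_nat_ge ((C - (y - 1)) / (lam - lam'))
          filter_upwards [eventually_ge_atTop N] with n hn
          rw [EReal.coe_le_coe_iff]
          have h3 := (abs_le.1 (hbound n)).2
          have hnN : ((C - (y - 1)) / (lam - lam')) ≤ (n : ℝ) := by
            exact hN.trans (by exact_mod_cast hn)
          rw [div_le_iff₀ hdelta] at hnN
          have ha' : a n = (Λ^[n] 0) x₀ := rfl
          nlinarith
        calc liminf (fun n : ℕ => (((Λ^[n] 0) x₀ + n * lam' : ℝ) : EReal)) atTop
            ≤ liminf (fun _ : ℕ => ((y - 1 : ℝ) : EReal)) atTop := liminf_le_liminf hev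
          _ = ((y - 1 : ℝ) : EReal) := liminf_const _
      exact lt_of_le_of_lt hle (by exact_mod_cast sub_one_lt y)
    · -- lam < lam' : liminf is ⊤
      apply (h' x₀).2
      rw [EReal.eq_top_iff_forall_lt]
      intro y
      have hdelta : 0 < lam' - lam := by linarith
      have hle : ((y + 1 : ℝ) : EReal)
          ≤ liminf (fun n : ℕ => (((Λ^[n] 0) x₀ + n * lam' : ℝ) : EReal)) atTop := by
        refine le_liminf_of_le (by isBoundedDefault) ?_
        obtain ⟨N, hN⟩ := exists_nat_ge (((y + 1) + C) / (lam' - lam))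
        filter_upwards [eventually_ge_atTop N] with n hn
        rw [EReal.coe_le_coe_iff]
        have h3 := (abs_le.1 (hbound n)).1
        have hnN : (((y + 1) + C) / (lam' - lam)) ≤ (n : ℝ) := hN.trans (by exact_mod_cast hn)
        rw [div_le_iff₀ hdelta] at hnN
        have ha' : a n = (Λ^[n] 0) x₀ := rfl
        nlinarith
      exact lt_of_lt_of_le (by exact_mod_cast lt_add_one y) hle
  · -- Lipschitz bound
    intro x y
    have main : ∀ x y : K, liminf (fun n : ℕ => (Λ^[n] 0) x + n * lam) atTop
        ≤ liminf (fun n : ℕ => (Λ^[n] 0) y + n * lam) atTop + L * dist x y := by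
      intro x y
      have hshift : liminf (fun n : ℕ => ((Λ^[n] 0) y + n * lam) + L * dist x y) atTop
          = liminf (fun n : ℕ => (Λ^[n] 0) y + n * lam) atTop + L * dist x y := by
        exact (Monotone.map_liminf_of_continuousAt
          (f := fun r : ℝ => r + L * dist x y)
          (monotone_id.add_const _) (fun n : ℕ => (Λ^[n] 0) y + n * lam)
          ((continuous_id.add continuous_const).continuousAt)
          ((hbdd1 y).isCoboundedUnder_ge) (hbdd2 y)).symm
      rw [← hshift]
      refine liminf_le_liminf (Eventually.of_forall fun n => ?_) (hbdd2 x) ?_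
      · have := hub n x y
        linarith
      · refine IsBoundedUnder.isCoboundedUnder_ge (isBoundedUnder_of
          ⟨2 * C + L * dist x y, fun n : ℕ => ?_⟩)
        have := (abs_le.1 (hg n y)).2
        linarith
    rw [hcoe x, hcoe y, EReal.toReal_coe, EReal.toReal_coe]
    rw [abs_sub_le_iff]
    constructor
    · have := main x y; linarith
    · have := main y x; rw [dist_comm] at this; linarith
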